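/- Let M be a finite separable diffuse (nonatomic) measure space, {φ_n}_{n=1}^∞ ⊂ L^1(M) a minimal system with biorthogonal functionals {c_n} ⊂ L^∞(M), and 𝔾 ⊂ ℂ a bounded set with 1 ∈ 𝔾. If {φ_n} possesses the asymptotic approximation property in L^1(M), then there exists a function U ∈ L^1(M) which is asymptotically conditionally universal for L^1(M) with respect to {φ_n}: there exist values {δ_n}_{n=1}^∞ ⊂ 𝔾 and measurable sets F_1 ⊂ F_2 ⊂ … ⊂ M with |F_m^∁| → 0 as m → ∞, such that for every f ∈ L^1(M) there is a subsequence {N_q}_{q=1}^∞ ⊂ ℕ with ∫_{F_m} |Σ_{n=1}^{N_q} δ_n c_n(U) φ_n(x) − f(x)| dx → 0 as q → ∞, for every m ∈ ℕ. -/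

import Mathlib

open MeasureTheory Filter Topology

/-- `D` is a subset of `L¹(μ)` (identified with integrable functions) which is dense
in the `L¹` metric. -/
def L1DenseSubset {M : Type*} [MeasurableSpace M] (μ : Measure M)
    (D : Set (M → ℂ)) : Prop :=
  (∀ f ∈ D, Integrable f μ) ∧
  ∀ g : M → ℂ, Integrable g μ → ∀ η > (0 : ℝ), ∃ f ∈ D, ∫ x, ‖f x - g x‖ ∂μ < η

/-- The asymptotic approximation property of the system `φ` in `L¹(μ)`, with a given
subset `D` and constant `C`. -/
def AsymApproxPropWith {M : Type*} [MeasurableSpace M] (μ : Measure M)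
    (φ : ℕ → M → ℂ) (𝔾 : Set ℂ) (D : Set (M → ℂ)) (C : ℝ) : Prop :=
  ∀ f ∈ D, ∀ ε > (0 : ℝ), ∀ δ > (0 : ℝ), ∀ σ > (0 : ℝ), ∀ n0 : ℕ,
    ∃ N : ℕ, n0 < N ∧ ∃ α : ℕ → ℂ, ∃ d : ℕ → ℂ, (∀ n, d n ∈ 𝔾) ∧
      ∃ E : Set M, MeasurableSet E ∧ μ Eᶜ < ENNReal.ofReal σ ∧
        (∫ x, ‖∑ n ∈ Finset.Icc n0 N, α n * φ n x‖ ∂μ < ε) ∧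
        (∫ x in E, ‖f x - ∑ n ∈ Finset.Icc n0 N, d n * α n * φ n x‖ ∂μ < δ) ∧
        (∫ x in Eᶜ, ‖∑ n ∈ Finset.Icc n0 N, d n * α n * φ n x‖ ∂μ ≤
          C * ∫ x, ‖f x‖ ∂μ)

open ENNReal NNReal

structure AAPStep (M : Type*) where
  N : ℕ
  S : M → ℂ
  a : ℕ → ℂ
  dd : ℕ → ℂ
  E : Set M
  g : M → ℂ

def AAPRel {M : Type*} [MeasurableSpace M] (μ : Measure M) (φ : ℕ → M → ℂ)
    (𝔾 : Set ℂ) (D : Set (M → ℂ)) (fs : ℕ → M → ℂ) (k : ℕ) (s t : AAPStep M) : Prop :=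
  s.N < t.N ∧ t.g ∈ D ∧ (∀ n, t.dd n ∈ 𝔾) ∧ MeasurableSet t.E ∧
  μ t.Eᶜ < ENNReal.ofReal ((2:ℝ)⁻¹ ^ (k+1)) ∧
  (∫ x, ‖t.g x - (fs (Nat.unpair (k+1)).1 x - s.S x)‖ ∂μ) < (2:ℝ)⁻¹ ^ (k+1) ∧
  (∫ x, ‖∑ n ∈ Finset.Ioc s.N t.N, t.a n * φ n x‖ ∂μ) < (2:ℝ)⁻¹ ^ (k+1) ∧
  (∫ x in t.E, ‖t.g x - ∑ n ∈ Finset.Ioc s.N t.N, t.dd n * t.a n * φ n x‖ ∂μ) < (2:ℝ)⁻¹ ^ (k+1) ∧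
  t.S = fun x => s.S x + ∑ n ∈ Finset.Ioc s.N t.N, t.dd n * t.a n * φ n x

lemma aap_step_exists {M : Type*} [MeasurableSpace M] {μ : Measure M}
    {φ : ℕ → M → ℂ} {𝔾 : Set ℂ} {D : Set (M → ℂ)} {C : ℝ} {fs : ℕ → M → ℂ}
    (hD : L1DenseSubset μ D) (hAAP : AsymApproxPropWith μ φ 𝔾 D C)
    (hφ : ∀ n, Integrable (φ n) μ) (hfs : ∀ j, Integrable (fs j) μ)
    (k : ℕ) (s : AAPStep M) (hS : Integrable s.S μ) :
    ∃ t, AAPRel μ φ 𝔾 D fs k s t ∧ Integrable t.S μ := by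
  have hpos : (0:ℝ) < (2:ℝ)⁻¹ ^ (k+1) := by positivity
  obtain ⟨g, hgD, hgapprox⟩ :=
    hD.2 (fun x => fs (Nat.unpair (k+1)).1 x - s.S x) ((hfs _).sub hS) _ hpos
  obtain ⟨N, hN, α, d, hd, E, hE, hEc, hH, hQ, -⟩ :=
    hAAP g hgD _ hpos _ hpos _ hpos (s.N + 1)
  have hIcc : Finset.Icc (s.N + 1) N = Finset.Ioc s.N N := Finset.Icc_add_one_left_eq_Ioc ..
  rw [hIcc] at hH hQ
  refine ⟨⟨N, fun x => s.S x + ∑ n ∈ Finset.Ioc s.N N, d n * α n * φ n x, α, d, E, g⟩,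
    ⟨lt_trans (Nat.lt_succ_self _) hN, hgD, hd, hE, hEc, hgapprox, hH, hQ, rfl⟩, ?_⟩
  exact hS.add <| integrable_finset_sum _ fun n _ => (hφ n).const_mul _

lemma aap_chain_exists {M : Type*} [MeasurableSpace M] {μ : Measure M}
    {φ : ℕ → M → ℂ} {𝔾 : Set ℂ} {D : Set (M → ℂ)} {C : ℝ} {fs : ℕ → M → ℂ}
    (hD : L1DenseSubset μ D) (hAAP : AsymApproxPropWith μ φ 𝔾 D C)
    (hφ : ∀ n, Integrable (φ n) μ) (hfs : ∀ j, Integrable (fs j) μ) :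
    ∃ ch : ℕ → AAPStep M, (ch 0).N = 0 ∧ (ch 0).S = (fun _ => 0) ∧
      (∀ k, Integrable (ch k).S μ) ∧ ∀ k, AAPRel μ φ 𝔾 D fs k (ch k) (ch (k+1)) := by
  classical
  let T := {s : AAPStep M // Integrable s.S μ}
  have hstep : ∀ (k : ℕ) (s : T), ∃ t : T, AAPRel μ φ 𝔾 D fs k s.1 t.1 := by
    intro k s
    obtain ⟨t, ht, hti⟩ := aap_step_exists hD hAAP hφ hfs k s.1 s.2
    exact ⟨⟨t, hti⟩, ht⟩
  let s0 : T := ⟨⟨0, fun _ => 0, 0, fun _ => 1, Set.univ, 0⟩, by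
    simpa using (integrable_zero M ℂ μ)⟩
  let ch' : ℕ → T := fun k => Nat.rec s0 (fun k ih => (hstep k ih).choose) k
  refine ⟨fun k => (ch' k).1, rfl, rfl, fun k => (ch' k).2, fun k => ?_⟩
  exact (hstep k (ch' k)).choose_spec


/-- If a minimal system `φ` (with biorthogonal functionals `c` in
`L^∞(μ)`) possesses the asymptotic approximation property in `L¹(μ)`, where `μ` is a
finite separable diffuse measure, then there exists an integrable function `U` which is
asymptotically conditionally universal for `L¹(μ)` w.r.t. `φ`. -/
theorem exists_asymptotically_conditionally_universal {M : Type*} [MeasurableSpace M]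
    (μ : Measure M) [IsFiniteMeasure μ] [NullSingletonClass μ]
    -- separability of the measure space, expressed as separability of `L¹(μ)`:
    (hsep : ∃ Dc : Set (M → ℂ), Dc.Countable ∧ L1DenseSubset μ Dc)
    (φ : ℕ → M → ℂ) (hφ : ∀ n, Integrable (φ n) μ)
    (c : ℕ → M → ℂ) (hc : ∀ n, MemLp (c n) ⊤ μ)
    (hbi : ∀ n m : ℕ, ∫ x, φ m x * c n x ∂μ = if n = m then 1 else 0)
    (𝔾 : Set ℂ) (h𝔾bdd : Bornology.IsBounded 𝔾) (h𝔾one : (1 : ℂ) ∈ 𝔾)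
    (haap : ∃ D : Set (M → ℂ), ∃ C : ℝ, L1DenseSubset μ D ∧ 0 < C ∧
      AsymApproxPropWith μ φ 𝔾 D C) :
    ∃ U : M → ℂ, Integrable U μ ∧
      ∃ d : ℕ → ℂ, (∀ n, d n ∈ 𝔾) ∧
      ∃ F : ℕ → Set M, (∀ m, MeasurableSet (F m)) ∧ Monotone F ∧
        Tendsto (fun m => μ (F m)ᶜ) atTop (𝓝 0) ∧
        ∀ f : M → ℂ, Integrable f μ →
          ∃ N : ℕ → ℕ, StrictMono N ∧ ∀ m : ℕ,
            Tendsto (fun q => ∫ x in F m,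
                ‖(∑ n ∈ Finset.range (N q), d n * (∫ t, U t * c n t ∂μ) * φ n x) - f x‖ ∂μ)
              atTop (𝓝 0) := by
  classical
  obtain ⟨Dc, hDcC, hDcD⟩ := hsep
  obtain ⟨D, C, hD, hC, hAAP⟩ := haap
  -- a countable dense sequence of integrable functions
  have hDcne : Dc.Nonempty := by
    obtain ⟨f, hf, -⟩ := hDcD.2 0 (integrable_zero M ℂ μ) 1 one_pos
    exact ⟨f, hf⟩
  obtain ⟨fs, hfs_range⟩ := Set.Countable.exists_eq_range hDcC hDcne
  have hfs_int : ∀ j, Integrable (fs j) μ := fun j =>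
    hDcD.1 _ (hfs_range ▸ Set.mem_range_self j)
  have hfs_dense : ∀ h : M → ℂ, Integrable h μ → ∀ η > (0:ℝ),
      ∃ j, ∫ x, ‖fs j x - h x‖ ∂μ < η := by
    intro h hh η hη
    obtain ⟨f, hf, hfapp⟩ := hDcD.2 h hh η hη
    rw [hfs_range] at hf
    obtain ⟨j, rfl⟩ := hf
    exact ⟨j, hfapp⟩
  obtain ⟨ch, hch0N, hch0S, hchInt, hchRel⟩ := aap_chain_exists hD hAAP hφ hfs_int
  set Nf : ℕ → ℕ := fun k => (ch k).N with hNf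
  have hNfmono : StrictMono Nf := strictMono_nat_of_lt_succ fun k => (hchRel k).1
  have hNf0 : Nf 0 = 0 := hch0N
  set Hf : ℕ → M → ℂ :=
    fun k x => ∑ n ∈ Finset.Ioc (Nf k) (Nf (k+1)), (ch (k+1)).a n * φ n x with hHf
  have hHf_int : ∀ k, Integrable (Hf k) μ := fun k =>
    integrable_finset_sum _ fun n _ => (hφ n).const_mul _
  have hHf_norm : ∀ k, ∫ x, ‖Hf k x‖ ∂μ < (2:ℝ)⁻¹ ^ (k+1) := fun k =>
    (hchRel k).2.2.2.2.2.2.1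
  set U : M → ℂ := fun x => ∑' k, Hf k x with hU
  -- summability facts
  have hlin : ∀ k, ∫⁻ x, ‖Hf k x‖₊ ∂μ ≤ ENNReal.ofReal ((2:ℝ)⁻¹ ^ (k+1)) := by
    intro k
    rw [show (∫⁻ x, (‖Hf k x‖₊ : ℝ≥0∞) ∂μ) = ∫⁻ x, ‖Hf k x‖ₑ ∂μ from rfl,
      ← ofReal_integral_norm_eq_lintegral_enorm (hHf_int k)]
    exact ENNReal.ofReal_le_ofReal (hHf_norm k).le
  have hofreal : ∀ k : ℕ, ENNReal.ofReal ((2:ℝ)⁻¹ ^ (k+1)) ≤ (2:ℝ≥0∞)⁻¹ ^ (k+1) := by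
    intro k
    rw [ENNReal.ofReal_pow (by norm_num)]
    gcongr
    rw [ENNReal.ofReal_inv_of_pos (by norm_num)]
    simp
  have hgeom : (∑' k : ℕ, ((2:ℝ≥0∞)⁻¹) ^ (k+1)) ≠ ⊤ := by
    refine ne_top_of_le_ne_top ?_ (ENNReal.tsum_le_tsum
      (fun k => pow_le_pow_of_le_one zero_le
        (ENNReal.inv_le_one.mpr one_le_two) (Nat.le_succ k)))
    simp [ENNReal.tsum_geometric, ENNReal.one_sub_inv_two]
  have hlintsum : ∫⁻ x, (∑' k, (‖Hf k x‖₊ : ℝ≥0∞)) ∂μ ≠ ⊤ := by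
    rw [show (∫⁻ x, (∑' k, (‖Hf k x‖₊ : ℝ≥0∞)) ∂μ) = ∫⁻ x, (∑' k, ‖Hf k x‖ₑ) ∂μ from rfl,
      lintegral_tsum (fun k => (hHf_int k).aestronglyMeasurable.enorm)]
    exact ne_top_of_le_ne_top hgeom
      (ENNReal.tsum_le_tsum fun k => (hlin k).trans (hofreal k))
  have hae_summable : ∀ᵐ x ∂μ, Summable fun k => ‖Hf k x‖ := by
    have hmeas : AEMeasurable (fun x => ∑' k, (‖Hf k x‖₊ : ℝ≥0∞)) μ :=
      AEMeasurable.ennreal_tsum fun k => (hHf_int k).aestronglyMeasurable.enorm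
    filter_upwards [ae_lt_top' hmeas hlintsum] with x hx
    have hs : Summable fun k => ((‖Hf k x‖₊ : ℝ)) :=
      ENNReal.tsum_coe_ne_top_iff_summable_coe.mp hx.ne
    simpa [coe_nnnorm] using hs
  have hU_int : Integrable U μ := by
    constructor
    · refine aestronglyMeasurable_of_tendsto_ae atTop
        (fun n => (integrable_finset_sum (Finset.range n)
          (fun k _ => hHf_int k)).aestronglyMeasurable) ?_
      filter_upwards [hae_summable] with x hx
      exact hx.of_norm.hasSum.tendsto_sum_nat
    · refine lt_of_le_of_lt (lintegral_mono_ae ?_) hlintsum.lt_top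
      filter_upwards [hae_summable] with x hx
      have hsnn : Summable fun k => ‖Hf k x‖₊ := by
        rw [← NNReal.summable_coe]; simpa [coe_nnnorm] using hx
      calc (‖U x‖₊ : ℝ≥0∞) ≤ ((∑' k, ‖Hf k x‖₊ : ℝ≥0) : ℝ≥0∞) :=
            ENNReal.coe_le_coe.mpr (nnnorm_tsum_le hsnn)
        _ = ∑' k, (‖Hf k x‖₊ : ℝ≥0∞) := ENNReal.coe_tsum hsnn
  -- Fourier coefficients of U
  set coef : ℕ → ℂ := fun n => ∫ t, U t * c n t ∂μ with hcoefdef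
  have hc_bdd : ∀ n, ∃ Kr : ℝ, 0 ≤ Kr ∧ ∀ᵐ x ∂μ, ‖c n x‖ ≤ Kr := by
    intro n
    have h1 : eLpNormEssSup (c n) μ < ⊤ := by
      have := (hc n).2; rwa [eLpNorm_exponent_top] at this
    refine ⟨(eLpNormEssSup (c n) μ).toReal, ENNReal.toReal_nonneg, ?_⟩
    filter_upwards [ae_le_eLpNormEssSup (f := c n) (μ := μ)] with x hx
    calc ‖c n x‖ = ((‖c n x‖₊ : ℝ≥0∞)).toReal := by simp
      _ ≤ _ := ENNReal.toReal_mono h1.ne hx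
  have hphic_int : ∀ i n, Integrable (fun x => φ i x * c n x) μ := by
    intro i n
    obtain ⟨Kr, hKr0, hKr⟩ := hc_bdd n
    exact (Integrable.bdd_mul (hφ i) (hc n).1 hKr).congr
      (Eventually.of_forall fun x => mul_comm _ _)
  have hHfc_int : ∀ k n, Integrable (fun x => Hf k x * c n x) μ := by
    intro k n
    obtain ⟨Kr, hKr0, hKr⟩ := hc_bdd n
    exact (Integrable.bdd_mul (hHf_int k) (hc n).1 hKr).congr
      (Eventually.of_forall fun x => mul_comm _ _)
  have hHfc_val : ∀ k n, ∫ x, Hf k x * c n x ∂μ =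
      if n ∈ Finset.Ioc (Nf k) (Nf (k+1)) then (ch (k+1)).a n else 0 := by
    intro k n
    have heq : (fun x => Hf k x * c n x) = fun x =>
        ∑ i ∈ Finset.Ioc (Nf k) (Nf (k+1)), (ch (k+1)).a i * (φ i x * c n x) := by
      funext x
      rw [hHf]
      rw [Finset.sum_mul]
      exact Finset.sum_congr rfl fun i _ => mul_assoc _ _ _
    rw [heq, integral_finset_sum _ (fun i _ => (hphic_int i n).const_mul _)]
    have : ∀ i ∈ Finset.Ioc (Nf k) (Nf (k+1)),
        ∫ x, (ch (k+1)).a i * (φ i x * c n x) ∂μ =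
          (ch (k+1)).a i * (if n = i then 1 else 0) := by
      intro i _
      rw [integral_const_mul, hbi n i]
    rw [Finset.sum_congr rfl this]
    simp only [mul_ite, mul_one, mul_zero, Finset.sum_ite_eq]
  have hcoef_tsum : ∀ n, coef n =
      ∑' k, (if n ∈ Finset.Ioc (Nf k) (Nf (k+1)) then (ch (k+1)).a n else 0) := by
    intro n
    obtain ⟨Kr, hKr0, hKr⟩ := hc_bdd n
    have h2 : Summable fun k => ∫ x, ‖Hf k x * c n x‖ ∂μ := by
      have hgs : Summable fun k : ℕ => (2:ℝ)⁻¹ ^ k * Kr :=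
        (summable_geometric_of_lt_one (by norm_num) (by norm_num)).mul_right Kr
      refine Summable.of_nonneg_of_le
        (fun k => integral_nonneg fun x => norm_nonneg _) (fun k => ?_) hgs
      have hb1 : ∫ x, ‖Hf k x * c n x‖ ∂μ ≤ ∫ x, ‖Hf k x‖ * Kr ∂μ := by
        refine integral_mono_ae (hHfc_int k n).norm ((hHf_int k).norm.mul_const Kr) ?_
        filter_upwards [hKr] with x hx
        rw [norm_mul]
        exact mul_le_mul_of_nonneg_left hx (norm_nonneg _)
      rw [integral_mul_const] at hb1
      refine hb1.trans (le_trans (mul_le_mul_of_nonneg_right (hHf_norm k).le hKr0) ?_)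
      exact mul_le_mul_of_nonneg_right
        (pow_le_pow_of_le_one (by norm_num) (by norm_num) (Nat.le_succ k)) hKr0
    have h1 : (fun x => U x * c n x) = fun x => ∑' k, Hf k x * c n x := by
      funext x
      exact (_root_.tsum_mul_right).symm
    calc coef n = ∫ x, ∑' k, Hf k x * c n x ∂μ := by
          rw [show coef n = ∫ x, U x * c n x ∂μ from rfl, h1]
      _ = ∑' k, ∫ x, Hf k x * c n x ∂μ :=
          (integral_tsum_of_summable_integral_norm (fun k => hHfc_int k n) h2).symm
      _ = _ := tsum_congr fun k => hHfc_val k n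
  have hblock_unique : ∀ k n, n ∈ Finset.Ioc (Nf k) (Nf (k+1)) →
      ∀ s, s ≠ k → n ∉ Finset.Ioc (Nf s) (Nf (s+1)) := by
    intro k n hn s hs hns
    rw [Finset.mem_Ioc] at hn hns
    rcases lt_or_gt_of_ne hs with h | h
    · exact absurd hns.2 (not_le.mpr
        (lt_of_le_of_lt (hNfmono.monotone (Nat.succ_le_of_lt h)) hn.1))
    · exact absurd hns.1 (not_lt.mpr
        (hn.2.trans (hNfmono.monotone (Nat.succ_le_of_lt h))))
  have hcoef_block : ∀ k n, n ∈ Finset.Ioc (Nf k) (Nf (k+1)) → coef n = (ch (k+1)).a n := by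
    intro k n hn
    rw [hcoef_tsum n, tsum_eq_single k ?_]
    · simp [hn]
    · intro s hs
      simp [hblock_unique k n hn s hs]
  have hcoef_zero : coef 0 = 0 := by
    rw [hcoef_tsum 0]
    convert tsum_zero with k
    simp [Finset.mem_Ioc]
  -- the signs
  have hex : ∀ n : ℕ, ∃ k, n ≤ Nf k := fun n => ⟨n, hNfmono.le_apply⟩
  set bk : ℕ → ℕ := fun n => Nat.find (hex n) with hbk
  have hbk_block : ∀ k n, n ∈ Finset.Ioc (Nf k) (Nf (k+1)) → bk n = k + 1 := by
    intro k n hn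
    rw [Finset.mem_Ioc] at hn
    refine (Nat.find_eq_iff _).mpr ⟨hn.2, ?_⟩
    intro j hj
    exact not_le.mpr (lt_of_le_of_lt (hNfmono.monotone (Nat.lt_succ_iff.mp hj)) hn.1)
  set dg : ℕ → ℂ := fun n => if n = 0 then 1 else (ch (bk n)).dd n with hdg
  have hdg𝔾 : ∀ n, dg n ∈ 𝔾 := by
    intro n
    by_cases h : n = 0
    · simp only [hdg, if_pos h]; exact h𝔾one
    · simp only [hdg, if_neg h]
      have h0 : bk n ≠ 0 := by
        intro h0
        have hb := Nat.find_spec (hex n)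
        rw [show Nat.find (hex n) = bk n from rfl, h0, hNf0] at hb
        omega
      obtain ⟨k, hk⟩ := Nat.exists_eq_succ_of_ne_zero h0
      rw [hk]
      exact (hchRel k).2.2.1 n
  -- main pointwise identity
  have hmain : ∀ k, (fun x => ∑ n ∈ Finset.range (Nf k + 1),
      dg n * (∫ t, U t * c n t ∂μ) * φ n x) = (ch k).S := by
    have hco : ∀ n, (∫ t, U t * c n t ∂μ) = coef n := fun n => rfl
    intro k
    induction k with
    | zero =>
      funext x
      rw [hNf0, hch0S]
      simp [hco, hcoef_zero]
    | succ k ih =>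
      funext x
      have hSS := (hchRel k).2.2.2.2.2.2.2.2
      rw [hSS]
      simp only [← ih]
      have hd2 : Disjoint (Finset.range (Nf k + 1)) (Finset.Ioc (Nf k) (Nf (k+1))) := by
        simp only [Finset.disjoint_left, Finset.mem_Ioc, Finset.mem_range]
        omega
      have hu : Finset.range (Nf k + 1) ∪ Finset.Ioc (Nf k) (Nf (k+1)) =
          Finset.range (Nf (k+1) + 1) := by
        ext i
        have hle : Nf k ≤ Nf (k+1) := (hNfmono (by omega : k < k + 1)).le
        simp only [Finset.mem_union, Finset.mem_range, Finset.mem_Ioc]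
        omega
      rw [← hu, Finset.sum_union hd2]
      congr 1
      refine Finset.sum_congr rfl fun n hn => ?_
      have h1 : coef n = (ch (k+1)).a n := hcoef_block k n hn
      have h2 : dg n = (ch (k+1)).dd n := by
        have hn0 : n ≠ 0 := by
          rw [Finset.mem_Ioc] at hn
          omega
        simp only [hdg, if_neg hn0, hbk_block k n hn]
      rw [hco n, h1, h2]
  -- the sets F
  set Ef : ℕ → Set M := fun k => (ch k).E with hEf
  have hEmeas : ∀ k, 0 < k → MeasurableSet (Ef k) := by
    intro k hk
    obtain ⟨k, rfl⟩ := Nat.exists_eq_succ_of_ne_zero hk.ne'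
    exact (hchRel k).2.2.2.1
  have hEsmall : ∀ k, μ (Ef (k+1))ᶜ < ENNReal.ofReal ((2:ℝ)⁻¹ ^ (k+1)) := fun k =>
    (hchRel k).2.2.2.2.1
  set F : ℕ → Set M := fun m => ⋂ (k : ℕ) (_ : m < k), Ef k with hF
  have hFmeas : ∀ m, MeasurableSet (F m) := by
    intro m
    exact MeasurableSet.iInter fun k => MeasurableSet.iInter fun hk =>
      hEmeas k (lt_of_le_of_lt (Nat.zero_le m) hk)
  have hFmono : Monotone F := by
    intro m m' hmm'
    exact Set.subset_iInter₂ fun k hk => Set.iInter₂_subset k (lt_of_le_of_lt hmm' hk)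
  have hFsub : ∀ m k, m < k → F m ⊆ Ef k := by
    intro m k hk
    exact Set.iInter₂_subset k hk
  have hFtend : Tendsto (fun m => μ (F m)ᶜ) atTop (𝓝 0) := by
    have hbound : ∀ m, μ (F m)ᶜ ≤ (2:ℝ≥0∞)⁻¹ ^ m := by
      intro m
      have hcompl : (F m)ᶜ = ⋃ (k : ℕ) (_ : m < k), (Ef k)ᶜ := by
        simp [hF, Set.compl_iInter]
      have hsub2 : (⋃ (k : ℕ) (_ : m < k), (Ef k)ᶜ) ⊆ ⋃ i : ℕ, (Ef (m+1+i))ᶜ := by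
        refine Set.iUnion₂_subset fun k hk => ?_
        refine Set.subset_iUnion_of_subset (k - m - 1) ?_
        have : m + 1 + (k - m - 1) = k := by omega
        rw [this]
      calc μ (F m)ᶜ ≤ μ (⋃ i : ℕ, (Ef (m+1+i))ᶜ) := by
            rw [hcompl]; exact measure_mono hsub2
        _ ≤ ∑' i, μ (Ef (m+1+i))ᶜ := measure_iUnion_le _
        _ ≤ ∑' i : ℕ, (2:ℝ≥0∞)⁻¹ ^ (m+1+i) := by
            refine ENNReal.tsum_le_tsum fun i => ?_
            have h2 : m + 1 + i = m + i + 1 := by omega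
            rw [h2]
            exact (hEsmall (m+i)).le.trans (hofreal (m+i))
        _ = (2:ℝ≥0∞)⁻¹ ^ (m+1) * ∑' i : ℕ, (2:ℝ≥0∞)⁻¹ ^ i := by
            rw [← ENNReal.tsum_mul_left]
            exact tsum_congr fun i => by rw [← pow_add]
        _ = (2:ℝ≥0∞)⁻¹ ^ m := by
            rw [ENNReal.tsum_geometric, ENNReal.one_sub_inv_two, inv_inv,
              pow_succ, mul_assoc, ENNReal.inv_mul_cancel two_ne_zero ENNReal.ofNat_ne_top,
              mul_one]
    refine tendsto_of_tendsto_of_tendsto_of_le_of_le tendsto_const_nhds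
      (ENNReal.tendsto_pow_atTop_nhds_zero_of_lt_one
        (ENNReal.inv_lt_one.mpr one_lt_two)) (fun m => zero_le) hbound
  refine ⟨U, hU_int, dg, hdg𝔾, F, hFmeas, hFmono, hFtend, ?_⟩
  intro f hf
  -- choose approximating indices
  have hjq : ∀ q : ℕ, ∃ j, ∫ x, ‖fs j x - f x‖ ∂μ < ((q:ℝ)+1)⁻¹ := by
    intro q
    exact hfs_dense f hf _ (by positivity)
  set jq : ℕ → ℕ := fun q => (hjq q).choose with hjqdef
  have hjq_spec : ∀ q, ∫ x, ‖fs (jq q) x - f x‖ ∂μ < ((q:ℝ)+1)⁻¹ := fun q =>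
    (hjq q).choose_spec
  have hk_ex : ∀ jj b : ℕ, ∃ k, b < k ∧ (Nat.unpair k).1 = jj := by
    intro jj b
    exact ⟨Nat.pair jj (b+1), lt_of_lt_of_le (Nat.lt_succ_self b)
      (Nat.right_le_pair _ _), by simp [Nat.unpair_pair]⟩
  set K : ℕ → ℕ := fun q =>
    Nat.rec (hk_ex (jq 0) 0).choose (fun q ih => (hk_ex (jq (q+1)) ih).choose) q with hK
  have hK_succ : ∀ q, K q < K (q+1) ∧ (Nat.unpair (K (q+1))).1 = jq (q+1) := by
    intro q
    exact (hk_ex (jq (q+1)) (K q)).choose_spec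
  have hK0 : 0 < K 0 ∧ (Nat.unpair (K 0)).1 = jq 0 := (hk_ex (jq 0) 0).choose_spec
  have hKmono : StrictMono K := strictMono_nat_of_lt_succ fun q => (hK_succ q).1
  have hKpos : ∀ q, 0 < K q := by
    intro q
    induction q with
    | zero => exact hK0.1
    | succ q ih => exact lt_trans ih (hK_succ q).1
  have hKt : ∀ q, (Nat.unpair (K q)).1 = jq q := by
    intro q
    cases q with
    | zero => exact hK0.2
    | succ q => exact (hK_succ q).2
  refine ⟨fun q => Nf (K q) + 1, by
      intro a b hab
      simpa using Nat.succ_lt_succ (hNfmono (hKmono hab)), ?_⟩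
  intro m
  -- the key estimate
  have hest : ∀ q, m < K q →
      ∫ x in F m, ‖(ch (K q)).S x - f x‖ ∂μ ≤
        (2:ℝ)⁻¹ ^ (K q) + (2:ℝ)⁻¹ ^ (K q) + ((q:ℝ)+1)⁻¹ := by
    intro q hq
    have hk0 : K q ≠ 0 := (hKpos q).ne'
    obtain ⟨s, hs⟩ := Nat.exists_eq_succ_of_ne_zero hk0
    obtain ⟨hNlt, hgD, hdd, hEmeas', hEc, hgapp, hHn, hQap, hSS⟩ := hchRel s
    have hs' : s + 1 = K q := by omega
    rw [show (Nat.unpair (s+1)).1 = jq q by rw [hs']; exact hKt q] at hgapp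
    set g : M → ℂ := (ch (s+1)).g with hgdef
    set Q : M → ℂ := fun x =>
      ∑ n ∈ Finset.Ioc (ch s).N (ch (s+1)).N, (ch (s+1)).dd n * (ch (s+1)).a n * φ n x
      with hQdef
    have hQ_int : Integrable Q μ :=
      integrable_finset_sum _ fun n _ => (hφ n).const_mul _
    have hg_int : Integrable g μ := hD.1 _ hgD
    have hS'_int : Integrable (ch s).S μ := hchInt s
    have hfsj_int : Integrable (fs (jq q)) μ := hfs_int (jq q)
    have hid : ∀ x, (ch (K q)).S x - f x =
        (Q x - g x) + (g x - (fs (jq q) x - (ch s).S x)) + (fs (jq q) x - f x) := by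
      intro x
      rw [hs, congrFun hSS x]
      ring
    have hptws : ∀ x, ‖(ch (K q)).S x - f x‖ ≤
        ‖Q x - g x‖ + ‖g x - (fs (jq q) x - (ch s).S x)‖ + ‖fs (jq q) x - f x‖ := by
      intro x
      rw [hid x]
      exact norm_add₃_le
    have hint1 : Integrable (fun x => ‖Q x - g x‖) μ := (hQ_int.sub hg_int).norm
    have hint2 : Integrable (fun x => ‖g x - (fs (jq q) x - (ch s).S x)‖) μ :=
      (hg_int.sub (hfsj_int.sub hS'_int)).norm
    have hint3 : Integrable (fun x => ‖fs (jq q) x - f x‖) μ := (hfsj_int.sub hf).norm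
    have hstep1 : ∫ x in F m, ‖(ch (K q)).S x - f x‖ ∂μ ≤
        ∫ x in F m, (‖Q x - g x‖ + ‖g x - (fs (jq q) x - (ch s).S x)‖ +
          ‖fs (jq q) x - f x‖) ∂μ := by
      refine integral_mono (((hchInt (K q)).sub hf).norm).integrableOn
        ((hint1.add hint2).add hint3).integrableOn hptws
    have hstep2 : ∫ x in F m, (‖Q x - g x‖ + ‖g x - (fs (jq q) x - (ch s).S x)‖ +
          ‖fs (jq q) x - f x‖) ∂μ =
        (∫ x in F m, ‖Q x - g x‖ ∂μ) +
        (∫ x in F m, ‖g x - (fs (jq q) x - (ch s).S x)‖ ∂μ) +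
        (∫ x in F m, ‖fs (jq q) x - f x‖ ∂μ) := by
      have hint12 : Integrable (fun x => ‖Q x - g x‖ +
          ‖g x - (fs (jq q) x - (ch s).S x)‖) μ := hint1.add hint2
      rw [integral_add hint12.integrableOn hint3.integrableOn,
        integral_add hint1.integrableOn hint2.integrableOn]
    have hb1 : ∫ x in F m, ‖Q x - g x‖ ∂μ < (2:ℝ)⁻¹ ^ (K q) := by
      have hsub : F m ⊆ Ef (K q) := hFsub m (K q) hq
      have h1 : ∫ x in F m, ‖Q x - g x‖ ∂μ ≤ ∫ x in Ef (K q), ‖Q x - g x‖ ∂μ :=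
        setIntegral_mono_set hint1.integrableOn
          (Eventually.of_forall fun x => norm_nonneg _) (HasSubset.Subset.eventuallyLE hsub)
      have h2 : ∫ x in Ef (K q), ‖Q x - g x‖ ∂μ = ∫ x in Ef (K q), ‖g x - Q x‖ ∂μ := by
        exact integral_congr_ae (Eventually.of_forall fun x => norm_sub_rev _ _)
      rw [hs] at h1 h2 ⊢
      exact lt_of_le_of_lt (h1.trans_eq h2) hQap
    have hb2 : ∫ x in F m, ‖g x - (fs (jq q) x - (ch s).S x)‖ ∂μ < (2:ℝ)⁻¹ ^ (K q) := by
      refine lt_of_le_of_lt (setIntegral_le_integral hint2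
        (Eventually.of_forall fun x => norm_nonneg _)) ?_
      rw [hs]
      exact hgapp
    have hb3 : ∫ x in F m, ‖fs (jq q) x - f x‖ ∂μ < ((q:ℝ)+1)⁻¹ := by
      refine lt_of_le_of_lt (setIntegral_le_integral hint3
        (Eventually.of_forall fun x => norm_nonneg _)) (hjq_spec q)
    calc ∫ x in F m, ‖(ch (K q)).S x - f x‖ ∂μ ≤ _ := hstep1
      _ = _ := hstep2
      _ ≤ (2:ℝ)⁻¹ ^ (K q) + (2:ℝ)⁻¹ ^ (K q) + ((q:ℝ)+1)⁻¹ := by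
        exact add_le_add (add_le_add hb1.le hb2.le) hb3.le
  -- conclude by squeezing
  have hupper : Tendsto (fun q : ℕ => (2:ℝ)⁻¹ ^ q * 2 + ((q:ℝ)+1)⁻¹) atTop (𝓝 0) := by
    have h1 : Tendsto (fun q : ℕ => (2:ℝ)⁻¹ ^ q) atTop (𝓝 0) :=
      tendsto_pow_atTop_nhds_zero_of_lt_one (by norm_num) (by norm_num)
    have h2 : Tendsto (fun q : ℕ => ((q:ℝ)+1)⁻¹) atTop (𝓝 0) := by
      simpa [one_div] using tendsto_one_div_add_atTop_nhds_zero_nat (𝕜 := ℝ)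
    simpa using (h1.mul_const 2).add h2
  refine tendsto_of_tendsto_of_tendsto_of_le_of_le' tendsto_const_nhds hupper ?_ ?_
  · exact Eventually.of_forall fun q => integral_nonneg fun x => norm_nonneg _
  · filter_upwards [eventually_gt_atTop m] with q hq
    have hm : m < K q := lt_of_lt_of_le hq hKmono.le_apply
    have hrw : ∀ x, (∑ n ∈ Finset.range (Nf (K q) + 1),
        dg n * (∫ t, U t * c n t ∂μ) * φ n x) = (ch (K q)).S x :=
      fun x => congrFun (hmain (K q)) x
    calc ∫ x in F m, ‖(∑ n ∈ Finset.range (Nf (K q) + 1),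
          dg n * (∫ t, U t * c n t ∂μ) * φ n x) - f x‖ ∂μ
        = ∫ x in F m, ‖(ch (K q)).S x - f x‖ ∂μ := by
          exact integral_congr_ae (Eventually.of_forall fun x => by simp only [hrw])
      _ ≤ (2:ℝ)⁻¹ ^ (K q) + (2:ℝ)⁻¹ ^ (K q) + ((q:ℝ)+1)⁻¹ := hest q hm
      _ ≤ (2:ℝ)⁻¹ ^ q * 2 + ((q:ℝ)+1)⁻¹ := by
          have hp : (2:ℝ)⁻¹ ^ (K q) ≤ (2:ℝ)⁻¹ ^ q :=
            pow_le_pow_of_le_one (by norm_num) (by norm_num) hKmono.le_apply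
          linarith
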